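/- Let n ≥ 2 and let π : Fin n → ℝ be defined by π i = (1 / d i) / (∑ j, 1 / d j), where d : Fin n → ℝ is positive (the degree function of a connected undirected graph) and p i j = A i j / d i with A : Fin n → Fin n → ℝ a symmetric matrix with nonnegative entries (A i j = A j i). Then π satisfies ∑ i, π i = 1 and, for every i, π i = (1 - ∑ j, p j i) * π i + ∑ j, p i j * π j. -/

import Mathlib

theorem stmt_3 (n : ℕ) (hn : 2 ≤ n)
    (d : Fin n → ℝ) (hd : ∀ i, 0 < d i)
    (A : Fin n → Fin n → ℝ)
    (hAnn : ∀ i j, 0 ≤ A i j) (hAsymm : ∀ i j, A i j = A j i)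
    (p : Fin n → Fin n → ℝ) (hp : ∀ i j, p i j = A i j / d i)
    (π : Fin n → ℝ)
    (hπ : ∀ i, π i = (1 / d i) / (∑ j, 1 / d j)) :
    (∑ i, π i = 1) ∧
      ∀ i, π i = (1 - ∑ j, p j i) * π i + ∑ j, p i j * π j := by
  have hS : 0 < ∑ j, 1 / d j := by
    apply Finset.sum_pos
    · intro j _; exact div_pos one_pos (hd j)
    · exact ⟨⟨0, by omega⟩, Finset.mem_univ _⟩
  constructor
  · rw [Finset.sum_congr rfl (fun i _ => hπ i), ← Finset.sum_div]
    exact div_self hS.ne'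
  · intro i
    have key : ∀ j, p j i * π i = p i j * π j := by
      intro j
      rw [hp, hp, hπ, hπ]
      field_simp
      rw [hAsymm j i]
    rw [sub_mul, one_mul, Finset.sum_mul, Finset.sum_congr rfl (fun j _ => key j)]
    ring
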